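/- Let f : ℝ → ℂ and F be continuous functions satisfying f(x)·f(y)·f(z) = F(x² + y² + z², x + y + z) for all real x, y, z. If f vanishes at some point, then f vanishes identically. -/
import Mathlib

theorem cubic_functional_equation_vanishing
    (f : ℝ → ℂ) (F : ℝ × ℝ → ℂ)
    (hf : Continuous f)
    (hF : ContinuousOn F {p : ℝ × ℝ | p.2^2 ≤ 3 * p.1})
    (heq : ∀ x y z : ℝ, f x * f y * f z = F (x^2 + y^2 + z^2, x + y + z))
    (hvan : ∃ x₀ : ℝ, f x₀ = 0) :
    ∀ x : ℝ, f x = 0 := by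
  -- Key lemma: if f x₀ = 0 and (z - x₀)(z - (4x - 3x₀)) ≥ 0 then f x * f x * f z = 0.
  have key : ∀ x z x₀ : ℝ, f x₀ = 0 → 0 ≤ (z - x₀) * (z - (4*x - 3*x₀)) →
      f x * f x * f z = 0 := by
    intro x z x₀ h0 hcond
    have hnn : (0:ℝ) ≤ ((z - x₀) * (z - (4*x - 3*x₀)))/4 := by linarith
    set r : ℝ := Real.sqrt (((z - x₀) * (z - (4*x - 3*x₀)))/4) with hr
    have hr2 : r^2 = ((z - x₀) * (z - (4*x - 3*x₀)))/4 := Real.sq_sqrt hnn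
    set y' : ℝ := (2*x + z - x₀)/2 + r with hy'
    set z' : ℝ := (2*x + z - x₀)/2 - r with hz'
    have hsum : x₀ + y' + z' = x + x + z := by
      rw [hy', hz']; ring
    have hsq : x₀^2 + y'^2 + z'^2 = x^2 + x^2 + z^2 := by
      rw [hy', hz']; linear_combination 2*hr2
    have e1 := heq x x z
    have e2 := heq x₀ y' z'
    rw [hsq, hsum] at e2
    rw [e1, ← e2, h0, zero_mul, zero_mul]
  by_contra hcon
  push_neg at hcon
  obtain ⟨b, hb⟩ := hcon
  obtain ⟨x₀, hx₀⟩ := hvan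
  set N : Set ℝ := {x | f x ≠ 0} with hN
  have hbN : b ∈ N := hb
  have hNopen : IsOpen N := by
    have : N = f ⁻¹' {0}ᶜ := by ext t; simp [hN]
    rw [this]
    exact (isOpen_compl_singleton).preimage hf
  -- N is bounded above
  have hbdd : BddAbove N := by
    refine ⟨max (4*b - 3*x₀) x₀, ?_⟩
    intro y hy
    by_contra hgt
    push_neg at hgt
    have h1 : 4*b - 3*x₀ < y := lt_of_le_of_lt (le_max_left _ _) hgt
    have h2 : x₀ < y := lt_of_le_of_lt (le_max_right _ _) hgt
    have hk := key b y x₀ hx₀ (by nlinarith)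
    rcases mul_eq_zero.mp hk with h | h
    · rcases mul_eq_zero.mp h with h' | h' <;> exact absurd h' hb
    · exact hy h
  have hne : N.Nonempty := ⟨b, hbN⟩
  set a : ℝ := sSup N with ha
  -- a ∉ N (since N is open)
  have haN : a ∉ N := by
    intro hmem
    obtain ⟨ε, hε, hball⟩ := Metric.isOpen_iff.mp hNopen a hmem
    have : a + ε/2 ∈ N := hball (show dist (a + ε/2) a < ε by
      rw [Real.dist_eq, show a + ε/2 - a = ε/2 by ring, abs_of_pos (by linarith)]
      linarith)
    have := le_csSup hbdd this
    linarith
  have hfa : f a = 0 := by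
    by_contra h; exact haN h
  -- b ∈ N, so b < a
  have hblt : b < a := lt_of_le_of_ne (le_csSup hbdd hbN) (by
    intro h; rw [h] at hbN; exact haN hbN)
  -- pick b₂ ∈ N with b₂ > a - (a - b)/4
  obtain ⟨b₂, hb₂N, hb₂gt⟩ := exists_lt_of_lt_csSup hne (show a - (a - b)/4 < a by linarith)
  -- apply key with x₀ := a, x := b₂, z := b
  have hkey := key b₂ b a hfa (by nlinarith)
  have hfb₂ : f b₂ ≠ 0 := hb₂N
  rcases mul_eq_zero.mp hkey with h | h
  · rcases mul_eq_zero.mp h with h' | h' <;> exact hfb₂ h'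
  · exact hb h
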